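/- The Weighted Load Balancing Algorithm, which allocates items in non-increasing cost order, each time to the agent maximizing the slack w_i·c(M) − c(X_i), outputs a WPROPX allocation: for every agent i and every item e ∈ X_i, c(X_i − e) ≤ w_i·c(M). -/

import Mathlib

open Finset

/-- The Weighted Load Balancing Algorithm outputs a WPROPX allocation. Agents
share an identical additive cost `c` (items sorted non-increasingly) and have
nonnegative weights summing to 1. The run is described by the assignment
`a : Fin m → Fin n`: when item `j` is allocated, its receiver `a j` maximizes the
slack `w i · c(M) - c(X_i)` over current partial bundles. Conclusion: for every
agent `i` and every item `e ∈ X_i`, `c(X_i - e) ≤ w i · c(M)`. -/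
theorem weightedLoadBalancing_WPROPX (n m : ℕ) (hn : 0 < n)
    (c : Fin m → ℝ) (w : Fin n → ℝ)
    (hc0 : ∀ e, 0 ≤ c e)
    (hsort : ∀ j k : Fin m, j ≤ k → c k ≤ c j)
    (hw : ∀ i, 0 ≤ w i) (hwsum : ∑ i, w i = 1)
    (a : Fin m → Fin n)
    (halg : ∀ (j : Fin m) (i : Fin n),
      w i * (∑ e, c e) - ∑ e ∈ Finset.univ.filter (fun e => e < j ∧ a e = i), c e ≤
        w (a j) * (∑ e, c e) -
          ∑ e ∈ Finset.univ.filter (fun e => e < j ∧ a e = a j), c e) :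
    ∀ (i : Fin n) (e : Fin m), a e = i →
      (∑ e' ∈ Finset.univ.filter (fun e' => a e' = i), c e') - c e ≤
        w i * ∑ e', c e' := by
  intro i e hae
  set C := ∑ e', c e' with hC
  set S := Finset.univ.filter (fun e' => a e' = i) with hS
  have heS : e ∈ S := by simp [hS, hae]
  have hSne : S.Nonempty := ⟨e, heS⟩
  set j := S.max' hSne with hj
  have hjS : j ∈ S := S.max'_mem hSne
  have haj : a j = i := by simpa [hS] using hjS
  have hej : e ≤ j := S.le_max' e heS
  have hce : c j ≤ c e := hsort e j hej
  have hsplit : (∑ e' ∈ S, c e') - c j =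
      ∑ e' ∈ Finset.univ.filter (fun e' => e' < j ∧ a e' = i), c e' := by
    have hfe : Finset.univ.filter (fun e' => e' < j ∧ a e' = i) = S.erase j := by
      ext x
      simp only [Finset.mem_erase, Finset.mem_filter, Finset.mem_univ, true_and, hS]
      constructor
      · rintro ⟨hx, hxi⟩; exact ⟨ne_of_lt hx, hxi⟩
      · rintro ⟨hne, hxi⟩
        exact ⟨lt_of_le_of_ne (S.le_max' x (by simp [hS, hxi])) hne, hxi⟩
    rw [hfe, Finset.sum_erase_eq_sub hjS]
  set load : Fin n → ℝ :=
    fun k => ∑ e' ∈ Finset.univ.filter (fun e' => e' < j ∧ a e' = k), c e' with hload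
  have key : load i ≤ w i * C := by
    have hslack : ∀ k, w k * C - load k ≤ w i * C - load i := by
      intro k
      have h := halg j k
      rw [haj] at h
      exact h
    have hsumload : ∑ k, load k = ∑ e' ∈ Finset.univ.filter (fun e' => e' < j), c e' := by
      rw [← Finset.sum_fiberwise (Finset.univ.filter (fun e' => e' < j)) a c]
      refine Finset.sum_congr rfl fun k _ => ?_
      rw [hload]
      congr 1
      rw [Finset.filter_filter]
    have hle : ∑ e' ∈ Finset.univ.filter (fun e' => e' < j), c e' ≤ C :=
      Finset.sum_le_sum_of_subset_of_nonneg (Finset.filter_subset _ _)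
        (fun x _ _ => hc0 x)
    have hsum : ∑ k, (w k * C - load k) = C - ∑ k, load k := by
      rw [Finset.sum_sub_distrib, ← Finset.sum_mul, hwsum, one_mul]
    have h0 : (0:ℝ) ≤ ∑ k, (w k * C - load k) := by
      rw [hsum, hsumload]; linarith
    have hub : ∑ k, (w k * C - load k) ≤ n • (w i * C - load i) := by
      calc ∑ k, (w k * C - load k) ≤ ∑ _k : Fin n, (w i * C - load i) :=
            Finset.sum_le_sum (fun k _ => hslack k)
        _ = n • (w i * C - load i) := by
            rw [Finset.sum_const, Finset.card_univ, Fintype.card_fin]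
    have hpos : (0:ℝ) < (n:ℝ) := Nat.cast_pos.mpr hn
    have : (0:ℝ) ≤ (n:ℝ) * (w i * C - load i) := by
      have := le_trans h0 hub
      rwa [nsmul_eq_mul] at this
    nlinarith
  have : (∑ e' ∈ S, c e') - c j ≤ w i * C := by rw [hsplit]; exact key
  linarith
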